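/- Let y be a nonnegative square-integrable real random variable with E[y] = μ where 0 ≤ μ ≤ 1, and suppose E[y²] ≤ μ + (1/2)·μ². Then E[p(y)] ≥ 0.634·μ, where p(y) := 1 - exp(-(y + (1/2)·y² + ((4 - 2√3)/3)·y³)). -/

import Mathlib

open Real

noncomputable def pfun (t : ℝ) : ℝ := 1 - Real.exp (-(t + (1/2)*t^2 + ((4 - 2*Real.sqrt 3)/3)*t^3))

lemma sqrt3_ub : Real.sqrt 3 ≤ 1.7320509 := by
  have h := Real.sq_sqrt (by norm_num : (3:ℝ) ≥ 0)
  nlinarith [Real.sqrt_nonneg 3]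

lemma C_lb : (0.178632:ℝ) ≤ (4 - 2*Real.sqrt 3)/3 := by
  have := sqrt3_ub; linarith

lemma C_nonneg : (0:ℝ) ≤ (4 - 2*Real.sqrt 3)/3 := by
  have := sqrt3_ub; linarith

lemma exp_taylor13 (x : ℝ) (hx : 0 ≤ x) :
    1 + x + x^2/2 + x^3/6 + x^4/24 + x^5/120 + x^6/720 + x^7/5040 + x^8/40320
      + x^9/362880 + x^10/3628800 + x^11/39916800 + x^12/479001600 ≤ Real.exp x := by
  have h := Real.sum_le_exp_of_nonneg hx 13
  rw [show (∑ i ∈ Finset.range 13, x ^ i / (Nat.factorial i : ℝ)) =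
      1 + x + x^2/2 + x^3/6 + x^4/24 + x^5/120 + x^6/720 + x^7/5040 + x^8/40320
      + x^9/362880 + x^10/3628800 + x^11/39916800 + x^12/479001600 from by
    simp [Finset.sum_range_succ, Nat.factorial]] at h
  exact h

lemma exp_taylor3 (x : ℝ) (hx : 0 ≤ x) : 1 + x + x^2/2 ≤ Real.exp x := by
  have h := Real.sum_le_exp_of_nonneg hx 3
  rw [show (∑ i ∈ Finset.range 3, x ^ i / (Nat.factorial i : ℝ)) = 1 + x + x^2/2 from by
    simp [Finset.sum_range_succ, Nat.factorial]] at h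
  exact h

lemma exp_neg_le (g S E : ℝ) (hS : S ≤ Real.exp g) (hSE : 1 ≤ E * S) (hS0 : 0 < S) :
    Real.exp (-g) ≤ E := by
  have h1 : Real.exp (-g) * Real.exp g = 1 := by rw [← Real.exp_add]; simp
  have h2 := Real.exp_pos g
  have hE : 0 < E := by nlinarith [hS0, hSE]
  rw [Real.exp_neg, inv_eq_one_div, div_le_iff₀ h2]
  calc (1:ℝ) ≤ E * S := hSE
    _ ≤ E * Real.exp g := by nlinarith [hE.le]

lemma pfun_ge (u G E : ℝ) (hu : 0 ≤ u) (hG0 : 0 ≤ G)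
    (hG : G ≤ u + (1/2)*u^2 + 0.178632*u^3)
    (hE : 1 ≤ E * (1 + G + G^2/2 + G^3/6 + G^4/24 + G^5/120 + G^6/720 + G^7/5040 + G^8/40320
      + G^9/362880 + G^10/3628800 + G^11/39916800 + G^12/479001600)) :
    1 - E ≤ pfun u := by
  have hC := C_lb
  have hg : G ≤ u + (1/2)*u^2 + ((4 - 2*Real.sqrt 3)/3)*u^3 := by
    nlinarith [pow_nonneg hu 3]
  have hS0 : (0:ℝ) < 1 + G + G^2/2 + G^3/6 + G^4/24 + G^5/120 + G^6/720 + G^7/5040 + G^8/40320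
      + G^9/362880 + G^10/3628800 + G^11/39916800 + G^12/479001600 := by positivity
  have hS : (1 + G + G^2/2 + G^3/6 + G^4/24 + G^5/120 + G^6/720 + G^7/5040 + G^8/40320
      + G^9/362880 + G^10/3628800 + G^11/39916800 + G^12/479001600)
      ≤ Real.exp (u + (1/2)*u^2 + ((4 - 2*Real.sqrt 3)/3)*u^3) :=
    le_trans (exp_taylor13 G hG0) (Real.exp_le_exp.2 hg)
  have := exp_neg_le _ _ E hS (hE) (lt_of_lt_of_le hS0 (le_refl _))
  unfold pfun
  linarith [this]

lemma pfun_mono {a b : ℝ} (ha : 0 ≤ a) (hab : a ≤ b) : pfun a ≤ pfun b := by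
  have hC := C_nonneg
  have h3 : a^3 ≤ b^3 := pow_le_pow_left₀ ha hab 3
  have h2 : a^2 ≤ b^2 := pow_le_pow_left₀ ha hab 2
  have : a + (1/2)*a^2 + ((4 - 2*Real.sqrt 3)/3)*a^3 ≤ b + (1/2)*b^2 + ((4 - 2*Real.sqrt 3)/3)*b^3 := by
    nlinarith [mul_le_mul_of_nonneg_left h3 hC]
  unfold pfun
  have := Real.exp_le_exp.2 (neg_le_neg this)
  linarith

lemma pfun_nonneg {t : ℝ} (ht : 0 ≤ t) : 0 ≤ pfun t := by
  have hC := C_nonneg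
  have : -(t + (1/2)*t^2 + ((4 - 2*Real.sqrt 3)/3)*t^3) ≤ 0 := by nlinarith [pow_nonneg ht 3, pow_nonneg ht 2]
  have h2 : Real.exp (-(t + (1/2)*t^2 + ((4 - 2*Real.sqrt 3)/3)*t^3)) ≤ 1 :=
    Real.exp_le_one_iff.2 this
  unfold pfun
  linarith

lemma pfun_le_one (t : ℝ) : pfun t ≤ 1 := by
  unfold pfun; linarith [Real.exp_pos (-(t + (1/2)*t^2 + ((4 - 2*Real.sqrt 3)/3)*t^3))]

lemma sqrt3_lb : (1.7320508:ℝ) ≤ Real.sqrt 3 := by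
  have h := Real.sq_sqrt (by norm_num : (3:ℝ) ≥ 0)
  nlinarith [Real.sqrt_nonneg 3]

lemma C_ub3 : (4 - 2*Real.sqrt 3)/3 ≤ 1/3 := by
  have := sqrt3_lb; linarith

lemma pfun_cont : Continuous pfun := by unfold pfun; continuity

lemma pfun_concave : ConcaveOn ℝ (Set.Ici 0) pfun := by
  set C := (4 - 2*Real.sqrt 3)/3 with hCdef
  have hC0 := C_nonneg
  have hC3 := C_ub3
  have hginner : ∀ t : ℝ, HasDerivAt (fun t : ℝ => -(t + (1/2)*t^2 + C*t^3))
      (-(1 + t + 3*C*t^2)) t := by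
    intro t
    have h1 : HasDerivAt (fun t : ℝ => t + (1/2)*t^2 + C*t^3)
        (1 + (1/2)*(2*t^1) + C*(3*t^2)) t :=
      ((hasDerivAt_id t).add ((hasDerivAt_pow 2 t).const_mul (1/2))).add
        ((hasDerivAt_pow 3 t).const_mul C)
    have := h1.neg
    exact this.congr_deriv (by ring)
  have hp' : ∀ t : ℝ, HasDerivAt pfun ((1 + t + 3*C*t^2) *
      Real.exp (-(t + (1/2)*t^2 + C*t^3))) t := by
    intro t
    have h2 := ((hginner t).exp).const_sub 1
    exact h2.congr_deriv (by ring)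
  have hd1 : deriv pfun = fun t => (1 + t + 3*C*t^2) * Real.exp (-(t + (1/2)*t^2 + C*t^3)) :=
    funext fun t => (hp' t).deriv
  refine (strictConcaveOn_of_deriv2_neg (convex_Ici 0) (pfun_cont.continuousOn) ?_).concaveOn
  intro x hx
  rw [interior_Ici] at hx
  have hpoly : HasDerivAt (fun t : ℝ => 1 + t + 3*C*t^2) (1 + 3*C*(2*x^1)) x := by
    have := ((hasDerivAt_const x (1:ℝ)).add (hasDerivAt_id x)).add ((hasDerivAt_pow 2 x).const_mul (3*C))
    exact this.congr_deriv (by norm_num)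
  have hp2 : HasDerivAt (fun t => (1 + t + 3*C*t^2) * Real.exp (-(t + (1/2)*t^2 + C*t^3)))
      (((1 + 6*C*x) - (1 + x + 3*C*x^2)^2) * Real.exp (-(x + (1/2)*x^2 + C*x^3))) x := by
    have := hpoly.mul ((hginner x).exp)
    exact this.congr_deriv (by ring)
  have hiter : deriv^[2] pfun x = deriv (deriv pfun) x := by
    simp [Function.iterate_succ, Function.iterate_zero, Function.comp]
  rw [hiter, hd1, hp2.deriv]
  have hexp := Real.exp_pos (-(x + (1/2)*x^2 + C*x^3))
  have hx0 : (0:ℝ) < x := hx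
  rw [← hCdef] at hC0 hC3
  have key : (1 + 6*C*x) - (1 + x + 3*C*x^2)^2 < 0 := by
    nlinarith [mul_pos hx0 hx0, sq_nonneg (C*x^2),
      mul_nonneg (by linarith : (0:ℝ) ≤ 1/3 - C) hx0.le,
      mul_nonneg (mul_nonneg hC0 hx0.le) (mul_pos hx0 hx0).le,
      mul_nonneg (mul_nonneg hC0 hx0.le) (mul_nonneg hx0.le (mul_pos hx0 hx0).le)]
  nlinarith [key, hexp]


lemma chord_bound {u v Pu Pv : ℝ} (h0 : 0 ≤ u) (huv : u < v)
    (hPu : Pu ≤ pfun u) (hPv : Pv ≤ pfun v) {t : ℝ} (hy1 : u ≤ t) (hy2 : t ≤ v) :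
    ((v - t) * Pu + (t - u) * Pv) / (v - u) ≤ pfun t := by
  have hvu : (0:ℝ) < v - u := by linarith
  have ha : (0:ℝ) ≤ (v - t)/(v - u) := div_nonneg (by linarith) hvu.le
  have hb : (0:ℝ) ≤ (t - u)/(v - u) := div_nonneg (by linarith) hvu.le
  have hab : (v - t)/(v - u) + (t - u)/(v - u) = 1 := by field_simp; ring
  have hv0 : (0:ℝ) ≤ v := by linarith
  have h := pfun_concave.2 (Set.mem_Ici.2 h0) (Set.mem_Ici.2 hv0) ha hb hab
  simp only [smul_eq_mul] at h
  have hxy : (v - t)/(v - u) * u + (t - u)/(v - u) * v = t := by field_simp; ring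
  rw [hxy] at h
  calc ((v - t) * Pu + (t - u) * Pv) / (v - u)
      = (v - t)/(v - u) * Pu + (t - u)/(v - u) * Pv := by ring
    _ ≤ (v - t)/(v - u) * pfun u + (t - u)/(v - u) * pfun v :=
        add_le_add (mul_le_mul_of_nonneg_left hPu ha) (mul_le_mul_of_nonneg_left hPv hb)
    _ ≤ pfun t := h

set_option maxHeartbeats 1000000 in
lemma node_0_135 : (0.13454:ℝ) ≤ pfun 0.135 := by
  have h := pfun_ge 0.135 0.144552 0.86546 (by norm_num) (by norm_num) (by norm_num) (by norm_num)
  linarith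
set_option maxHeartbeats 1000000 in
lemma node_0_206 : (0.204445:ℝ) ≤ pfun 0.206 := by
  have h := pfun_ge 0.206 0.228779 0.795555 (by norm_num) (by norm_num) (by norm_num) (by norm_num)
  linarith
set_option maxHeartbeats 1000000 in
lemma node_0_276 : (0.272232:ℝ) ≤ pfun 0.276 := by
  have h := pfun_ge 0.276 0.317843 0.727768 (by norm_num) (by norm_num) (by norm_num) (by norm_num)
  linarith
set_option maxHeartbeats 1000000 in
lemma node_0_393 : (0.381826:ℝ) ≤ pfun 0.393 := by
  have h := pfun_ge 0.393 0.481067 0.618174 (by norm_num) (by norm_num) (by norm_num) (by norm_num)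
  linarith
set_option maxHeartbeats 1000000 in
lemma node_0_5 : (0.476507:ℝ) ≤ pfun 0.5 := by
  have h := pfun_ge 0.5 0.647329 0.523493 (by norm_num) (by norm_num) (by norm_num) (by norm_num)
  linarith
set_option maxHeartbeats 1000000 in
lemma node_0_654 : (0.600563:ℝ) ≤ pfun 0.654 := by
  have h := pfun_ge 0.654 0.917826 0.399437 (by norm_num) (by norm_num) (by norm_num) (by norm_num)
  linarith
set_option maxHeartbeats 1000000 in
lemma node_1_119 : (0.863987:ℝ) ≤ pfun 1.119 := by
  have h := pfun_ge 1.119 1.995373 0.136013 (by norm_num) (by norm_num) (by norm_num) (by norm_num)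
  linarith
set_option maxHeartbeats 1000000 in
lemma node_1_3 : (0.920882:ℝ) ≤ pfun 1.3 := by
  have h := pfun_ge 1.3 2.537454 0.079118 (by norm_num) (by norm_num) (by norm_num) (by norm_num)
  linarith
set_option maxHeartbeats 1000000 in
lemma node_1_398 : (0.942868:ℝ) ≤ pfun 1.398 := by
  have h := pfun_ge 1.398 2.86327 0.057132 (by norm_num) (by norm_num) (by norm_num) (by norm_num)
  linarith
set_option maxHeartbeats 1000000 in
lemma node_1_544 : (0.966358:ℝ) ≤ pfun 1.544 := by
  have h := pfun_ge 1.544 3.393476 0.033642 (by norm_num) (by norm_num) (by norm_num) (by norm_num)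
  linarith
set_option maxHeartbeats 1000000 in
lemma node_1_626 : (0.975615:ℝ) ≤ pfun 1.626 := by
  have h := pfun_ge 1.626 3.715866 0.024385 (by norm_num) (by norm_num) (by norm_num) (by norm_num)
  linarith
set_option maxHeartbeats 1000000 in
lemma node_1_707 : (0.982569:ℝ) ≤ pfun 1.707 := by
  have h := pfun_ge 1.707 4.052429 0.017431 (by norm_num) (by norm_num) (by norm_num) (by norm_num)
  linarith
set_option maxHeartbeats 1000000 in
lemma node_1_816 : (0.98922:ℝ) ≤ pfun 1.816 := by
  have h := pfun_ge 1.816 4.534738 0.01078 (by norm_num) (by norm_num) (by norm_num) (by norm_num)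
  linarith
set_option maxHeartbeats 1000000 in
lemma node_2_076 : (0.997009:ℝ) ≤ pfun 2.076 := by
  have h := pfun_ge 2.076 5.829125 0.002991 (by norm_num) (by norm_num) (by norm_num) (by norm_num)
  linarith
set_option maxHeartbeats 1000000 in
lemma node_2_1 : (0.997368:ℝ) ≤ pfun 2.1 := by
  have h := pfun_ge 2.1 5.95931 0.002632 (by norm_num) (by norm_num) (by norm_num) (by norm_num)
  linarith

set_option maxHeartbeats 1000000 in
lemma pw_A (t : ℝ) (h0 : 0 ≤ t) : (t - 0.29*t^2 : ℝ) ≤ pfun t := by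
  have ha0 : (0.476507:ℝ) ≤ pfun 0.5 := node_0_5
  have ha1 : (0.920882:ℝ) ≤ pfun 1.3 := node_1_3
  have ha2 : (0.997368:ℝ) ≤ pfun 2.1 := node_2_1
  rcases le_total t 0.5 with g0|g0
  · -- polynomial region [0, 1/2]
    have hG0 : (0:ℝ) ≤ t + (1/2)*t^2 + 0.178632*t^3 := by positivity
    have hg : t + (1/2)*t^2 + 0.178632*t^3
        ≤ t + (1/2)*t^2 + ((4 - 2*Real.sqrt 3)/3)*t^3 := by
      nlinarith [C_lb, pow_nonneg h0 3]
    have hS : 1 + (t + (1/2)*t^2 + 0.178632*t^3) + (t + (1/2)*t^2 + 0.178632*t^3)^2/2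
        ≤ Real.exp (t + (1/2)*t^2 + ((4 - 2*Real.sqrt 3)/3)*t^3) :=
      le_trans (exp_taylor3 _ hG0) (Real.exp_le_exp.2 hg)
    have hE : Real.exp (-(t + (1/2)*t^2 + ((4 - 2*Real.sqrt 3)/3)*t^3)) ≤ 1 - t + 0.29*t^2 := by
      refine exp_neg_le _ _ _ hS ?_ (by positivity)
      nlinarith [pow_nonneg h0 2, pow_nonneg h0 3, pow_nonneg h0 4, pow_nonneg h0 5,
        pow_nonneg h0 6, pow_nonneg h0 7, pow_nonneg h0 8,
        mul_nonneg (pow_nonneg h0 2) (sub_nonneg.2 g0),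
        mul_nonneg (pow_nonneg h0 3) (sub_nonneg.2 g0),
        mul_nonneg (pow_nonneg h0 4) (sub_nonneg.2 g0),
        mul_nonneg (pow_nonneg h0 5) (sub_nonneg.2 g0)]
    unfold pfun
    linarith
  rcases le_total t 1.3 with g1|g1
  · have hch := chord_bound (by norm_num) (by norm_num : (0.5:ℝ) < 1.3) ha0 ha1 g0 g1
    have hq : (t - 0.29*t^2 : ℝ)
        ≤ ((1.3 - t) * 0.476507 + (t - 0.5) * 0.920882) / (1.3 - 0.5) := by
      rw [le_div_iff₀ (by norm_num : (0:ℝ) < 1.3 - 0.5)]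
      nlinarith [sq_nonneg (t - 0.766), mul_nonneg (sub_nonneg.2 g0) (sub_nonneg.2 g1)]
    linarith
  rcases le_total t 2.1 with g2|g2
  · have hch := chord_bound (by norm_num) (by norm_num : (1.3:ℝ) < 2.1) ha1 ha2 g1 g2
    have hq : (t - 0.29*t^2 : ℝ)
        ≤ ((2.1 - t) * 0.920882 + (t - 1.3) * 0.997368) / (2.1 - 1.3) := by
      rw [le_div_iff₀ (by norm_num : (0:ℝ) < 2.1 - 1.3)]
      nlinarith [sq_nonneg (t - 1.559), mul_nonneg (sub_nonneg.2 g1) (sub_nonneg.2 g2)]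
    linarith
  · -- tail t ≥ 2.1
    have hm := pfun_mono (by norm_num : (0:ℝ) ≤ 2.1) g2
    nlinarith [sq_nonneg (t - 1.7241), ha2, hm]

set_option maxHeartbeats 1000000 in
lemma pw_B (t : ℝ) (h0 : 0 ≤ t) : (-0.01108 + 1.10746*t - 0.30812*t^2 : ℝ) ≤ pfun t := by
  have hn0 : (0:ℝ) ≤ pfun 0 := by unfold pfun; norm_num [Real.exp_zero]
  have hn1 : (0.13454:ℝ) ≤ pfun 0.135 := node_0_135
  have hn2 : (0.204445:ℝ) ≤ pfun 0.206 := node_0_206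
  have hn3 : (0.272232:ℝ) ≤ pfun 0.276 := node_0_276
  have hn4 : (0.381826:ℝ) ≤ pfun 0.393 := node_0_393
  have hn5 : (0.600563:ℝ) ≤ pfun 0.654 := node_0_654
  have hn6 : (0.863987:ℝ) ≤ pfun 1.119 := node_1_119
  have hn7 : (0.942868:ℝ) ≤ pfun 1.398 := node_1_398
  have hn8 : (0.966358:ℝ) ≤ pfun 1.544 := node_1_544
  have hn9 : (0.975615:ℝ) ≤ pfun 1.626 := node_1_626
  have hn10 : (0.982569:ℝ) ≤ pfun 1.707 := node_1_707
  have hn11 : (0.98922:ℝ) ≤ pfun 1.816 := node_1_816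
  have hn12 : (0.997009:ℝ) ≤ pfun 2.076 := node_2_076
  rcases le_total t 0.135 with h1|h1
  · have hch := chord_bound (by norm_num) (by norm_num : (0:ℝ) < 0.135) hn0 hn1 h0 h1
    have hq : (-0.01108 + 1.10746*t - 0.30812*t^2 : ℝ)
        ≤ ((0.135 - t) * 0 + (t - 0) * 0.13454) / (0.135 - 0) := by
      rw [le_div_iff₀ (by norm_num : (0:ℝ) < 0.135 - 0)]
      nlinarith [sq_nonneg (t - 0.18), mul_nonneg (sub_nonneg.2 h0) (sub_nonneg.2 h1)]
    linarith
  rcases le_total t 0.206 with h2|h2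
  · have hch := chord_bound (by norm_num) (by norm_num : (0.135:ℝ) < 0.206) hn1 hn2 h1 h2
    have hq : (-0.01108 + 1.10746*t - 0.30812*t^2 : ℝ)
        ≤ ((0.206 - t) * 0.13454 + (t - 0.135) * 0.204445) / (0.206 - 0.135) := by
      rw [le_div_iff₀ (by norm_num : (0:ℝ) < 0.206 - 0.135)]
      nlinarith [sq_nonneg (t - 0.199), mul_nonneg (sub_nonneg.2 h1) (sub_nonneg.2 h2)]
    linarith
  rcases le_total t 0.276 with h3|h3
  · have hch := chord_bound (by norm_num) (by norm_num : (0.206:ℝ) < 0.276) hn2 hn3 h2 h3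
    have hq : (-0.01108 + 1.10746*t - 0.30812*t^2 : ℝ)
        ≤ ((0.276 - t) * 0.204445 + (t - 0.206) * 0.272232) / (0.276 - 0.206) := by
      rw [le_div_iff₀ (by norm_num : (0:ℝ) < 0.276 - 0.206)]
      nlinarith [sq_nonneg (t - 0.226), mul_nonneg (sub_nonneg.2 h2) (sub_nonneg.2 h3)]
    linarith
  rcases le_total t 0.393 with h4|h4
  · have hch := chord_bound (by norm_num) (by norm_num : (0.276:ℝ) < 0.393) hn3 hn4 h3 h4
    have hq : (-0.01108 + 1.10746*t - 0.30812*t^2 : ℝ)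
        ≤ ((0.393 - t) * 0.272232 + (t - 0.276) * 0.381826) / (0.393 - 0.276) := by
      rw [le_div_iff₀ (by norm_num : (0:ℝ) < 0.393 - 0.276)]
      nlinarith [sq_nonneg (t - 0.277), mul_nonneg (sub_nonneg.2 h3) (sub_nonneg.2 h4)]
    linarith
  rcases le_total t 0.654 with h5|h5
  · have hch := chord_bound (by norm_num) (by norm_num : (0.393:ℝ) < 0.654) hn4 hn5 h4 h5
    have hq : (-0.01108 + 1.10746*t - 0.30812*t^2 : ℝ)
        ≤ ((0.654 - t) * 0.381826 + (t - 0.393) * 0.600563) / (0.654 - 0.393) := by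
      rw [le_div_iff₀ (by norm_num : (0:ℝ) < 0.654 - 0.393)]
      nlinarith [sq_nonneg (t - 0.437), mul_nonneg (sub_nonneg.2 h4) (sub_nonneg.2 h5)]
    linarith
  rcases le_total t 1.119 with h6|h6
  · have hch := chord_bound (by norm_num) (by norm_num : (0.654:ℝ) < 1.119) hn5 hn6 h5 h6
    have hq : (-0.01108 + 1.10746*t - 0.30812*t^2 : ℝ)
        ≤ ((1.119 - t) * 0.600563 + (t - 0.654) * 0.863987) / (1.119 - 0.654) := by
      rw [le_div_iff₀ (by norm_num : (0:ℝ) < 1.119 - 0.654)]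
      nlinarith [sq_nonneg (t - 0.878), mul_nonneg (sub_nonneg.2 h5) (sub_nonneg.2 h6)]
    linarith
  rcases le_total t 1.398 with h7|h7
  · have hch := chord_bound (by norm_num) (by norm_num : (1.119:ℝ) < 1.398) hn6 hn7 h6 h7
    have hq : (-0.01108 + 1.10746*t - 0.30812*t^2 : ℝ)
        ≤ ((1.398 - t) * 0.863987 + (t - 1.119) * 0.942868) / (1.398 - 1.119) := by
      rw [le_div_iff₀ (by norm_num : (0:ℝ) < 1.398 - 1.119)]
      nlinarith [sq_nonneg (t - 1.338), mul_nonneg (sub_nonneg.2 h6) (sub_nonneg.2 h7)]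
    linarith
  rcases le_total t 1.544 with h8|h8
  · have hch := chord_bound (by norm_num) (by norm_num : (1.398:ℝ) < 1.544) hn7 hn8 h7 h8
    have hq : (-0.01108 + 1.10746*t - 0.30812*t^2 : ℝ)
        ≤ ((1.544 - t) * 0.942868 + (t - 1.398) * 0.966358) / (1.544 - 1.398) := by
      rw [le_div_iff₀ (by norm_num : (0:ℝ) < 1.544 - 1.398)]
      nlinarith [sq_nonneg (t - 1.536), mul_nonneg (sub_nonneg.2 h7) (sub_nonneg.2 h8)]
    linarith
  rcases le_total t 1.626 with h9|h9
  · have hch := chord_bound (by norm_num) (by norm_num : (1.544:ℝ) < 1.626) hn8 hn9 h8 h9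
    have hq : (-0.01108 + 1.10746*t - 0.30812*t^2 : ℝ)
        ≤ ((1.626 - t) * 0.966358 + (t - 1.544) * 0.975615) / (1.626 - 1.544) := by
      rw [le_div_iff₀ (by norm_num : (0:ℝ) < 1.626 - 1.544)]
      nlinarith [sq_nonneg (t - 1.614), mul_nonneg (sub_nonneg.2 h8) (sub_nonneg.2 h9)]
    linarith
  rcases le_total t 1.707 with h10|h10
  · have hch := chord_bound (by norm_num) (by norm_num : (1.626:ℝ) < 1.707) hn9 hn10 h9 h10
    have hq : (-0.01108 + 1.10746*t - 0.30812*t^2 : ℝ)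
        ≤ ((1.707 - t) * 0.975615 + (t - 1.626) * 0.982569) / (1.707 - 1.626) := by
      rw [le_div_iff₀ (by norm_num : (0:ℝ) < 1.707 - 1.626)]
      nlinarith [sq_nonneg (t - 1.658), mul_nonneg (sub_nonneg.2 h9) (sub_nonneg.2 h10)]
    linarith
  rcases le_total t 1.816 with h11|h11
  · have hch := chord_bound (by norm_num) (by norm_num : (1.707:ℝ) < 1.816) hn10 hn11 h10 h11
    have hq : (-0.01108 + 1.10746*t - 0.30812*t^2 : ℝ)
        ≤ ((1.816 - t) * 0.982569 + (t - 1.707) * 0.98922) / (1.816 - 1.707) := by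
      rw [le_div_iff₀ (by norm_num : (0:ℝ) < 1.816 - 1.707)]
      nlinarith [sq_nonneg (t - 1.698), mul_nonneg (sub_nonneg.2 h10) (sub_nonneg.2 h11)]
    linarith
  rcases le_total t 2.076 with h12|h12
  · have hch := chord_bound (by norm_num) (by norm_num : (1.816:ℝ) < 2.076) hn11 hn12 h11 h12
    have hq : (-0.01108 + 1.10746*t - 0.30812*t^2 : ℝ)
        ≤ ((2.076 - t) * 0.98922 + (t - 1.816) * 0.997009) / (2.076 - 1.816) := by
      rw [le_div_iff₀ (by norm_num : (0:ℝ) < 2.076 - 1.816)]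
      nlinarith [sq_nonneg (t - 1.749), mul_nonneg (sub_nonneg.2 h11) (sub_nonneg.2 h12)]
    linarith
  · -- tail t ≥ 2.076
    have hm := pfun_mono (by norm_num : (0:ℝ) ≤ 2.076) h12
    nlinarith [sq_nonneg (t - 1.797), hn12, hm]

open MeasureTheory

theorem second_moment_to_ratio_b
    {Ω : Type*} [MeasurableSpace Ω] (P : Measure Ω) [IsProbabilityMeasure P]
    (y : Ω → ℝ) (μ : ℝ)
    (hy : MemLp y 2 P) (hpos : ∀ ω, 0 ≤ y ω)
    (hmean : ∫ ω, y ω ∂P = μ) (hμ0 : 0 ≤ μ) (hμ1 : μ ≤ 1)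
    (hsq : ∫ ω, (y ω) ^ 2 ∂P ≤ μ + (1/2) * μ ^ 2) :
    0.634 * μ ≤ ∫ ω,
      (1 - Real.exp (-(y ω + (1/2) * (y ω) ^ 2 + ((4 - 2 * Real.sqrt 3) / 3) * (y ω) ^ 3))) ∂P := by
  have hy1 : Integrable y P := hy.integrable one_le_two
  have hy2 : Integrable (fun ω => (y ω)^2) P := hy.integrable_sq
  have hgoal : (∫ ω, (1 - Real.exp (-(y ω + (1/2) * (y ω) ^ 2
      + ((4 - 2 * Real.sqrt 3) / 3) * (y ω) ^ 3))) ∂P) = ∫ ω, pfun (y ω) ∂P := rfl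
  rw [hgoal]
  have hmeas : AEStronglyMeasurable (fun ω => pfun (y ω)) P :=
    pfun_cont.comp_aestronglyMeasurable hy.aestronglyMeasurable
  have hfin : Integrable (fun ω => pfun (y ω)) P := by
    refine Integrable.mono' (integrable_const 1) hmeas ?_
    filter_upwards with ω
    rw [Real.norm_eq_abs, abs_le]
    exact ⟨by linarith [pfun_nonneg (hpos ω)], pfun_le_one (y ω)⟩
  rcases le_total μ (1/2) with hc|hc
  · have hqint : Integrable (fun ω => y ω - 0.29*(y ω)^2) P := hy1.sub (hy2.const_mul 0.29)
    have hmono : (∫ ω, (y ω - 0.29*(y ω)^2) ∂P) ≤ ∫ ω, pfun (y ω) ∂P :=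
      integral_mono hqint hfin (fun ω => pw_A (y ω) (hpos ω))
    have hval : (∫ ω, (y ω - 0.29*(y ω)^2) ∂P) = μ - 0.29 * ∫ ω, (y ω)^2 ∂P := by
      rw [integral_sub hy1 (hy2.const_mul 0.29), integral_const_mul, hmean]
    rw [hval] at hmono
    nlinarith [mul_nonneg hμ0 (sub_nonneg.2 hc)]
  · have hqint : Integrable (fun ω => -0.01108 + 1.10746*(y ω) - 0.30812*(y ω)^2) P :=
      ((integrable_const (-0.01108:ℝ)).add (hy1.const_mul 1.10746)).sub (hy2.const_mul 0.30812)
    have hmono : (∫ ω, (-0.01108 + 1.10746*(y ω) - 0.30812*(y ω)^2) ∂P) ≤ ∫ ω, pfun (y ω) ∂P :=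
      integral_mono hqint hfin (fun ω => pw_B (y ω) (hpos ω))
    have hval : (∫ ω, (-0.01108 + 1.10746*(y ω) - 0.30812*(y ω)^2) ∂P)
        = -0.01108 + 1.10746 * μ - 0.30812 * ∫ ω, (y ω)^2 ∂P := by
      have hadd : Integrable (fun ω => -0.01108 + 1.10746*(y ω)) P :=
        (integrable_const (-0.01108:ℝ)).add (hy1.const_mul 1.10746)
      rw [integral_sub hadd (hy2.const_mul 0.30812),
        integral_add (integrable_const _) (hy1.const_mul _), integral_const_mul,
        integral_const_mul, integral_const, hmean]
      simp
    rw [hval] at hmono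
    nlinarith [mul_nonneg (sub_nonneg.2 hμ1) (sub_nonneg.2 hc)]
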